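/- Let Λ be the exterior algebra over ℝ on generators σ₁,…,σ_L (L finite). If elements A₁,…,A_L ∈ Λ satisfy σ_j·A_i + σ_i·A_j = 0 for all i, j ∈ {1,…,L}, then there exists F ∈ Λ such that A_i = σ_i·F for every i. -/

import Mathlib

open ExteriorAlgebra CliffordAlgebra DirectSum

namespace VV

variable (L : ℕ)

local notation "M" => (Fin L → ℝ)
local notation "Λ" => ExteriorAlgebra ℝ (Fin L → ℝ)
local notation "𝒜" => (fun k : ℕ => ⋀[ℝ]^k (Fin L → ℝ))

noncomputable def σg (i : Fin L) : Λ := ExteriorAlgebra.ι ℝ (Pi.single i 1)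

noncomputable def der (i : Fin L) : Λ →ₗ[ℝ] Λ :=
  CliffordAlgebra.contractLeft (LinearMap.proj i)

lemma der_ι_mul (i : Fin L) (v : M) (x : Λ) :
    der L i (ExteriorAlgebra.ι ℝ v * x) = v i • x - ExteriorAlgebra.ι ℝ v * der L i x :=
  CliffordAlgebra.contractLeft_ι_mul _ _ _

lemma sum_smul_σg (v : M) : ∑ i, v i • σg L i = ExteriorAlgebra.ι ℝ v := by
  simp_rw [σg, ← map_smul, ← map_sum]
  congr 1
  ext j
  simp [Pi.single_apply]

lemma anticomm (v w : M) :
    ExteriorAlgebra.ι ℝ v * ExteriorAlgebra.ι ℝ w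
      = -(ExteriorAlgebra.ι ℝ w * ExteriorAlgebra.ι ℝ v) := by
  refine eq_neg_of_add_eq_zero_left ?_
  simpa using CliffordAlgebra.ι_mul_ι_add_swap (Q := (0 : QuadraticForm ℝ (Fin L → ℝ))) w v

noncomputable def D : Λ →ₗ[ℝ] Λ :=
  ∑ i : Fin L, (LinearMap.mulLeft ℝ (σg L i)) ∘ₗ der L i

lemma D_apply (x : Λ) : D L x = ∑ i, σg L i * der L i x := by
  simp [D, LinearMap.sum_apply]

lemma D_grade (n : ℕ) (x : Λ) (hx : x ∈ ⋀[ℝ]^n (Fin L → ℝ)) : D L x = (n : ℝ) • x := by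
  induction hx using Submodule.pow_induction_on_left' with
  | algebraMap r => simp [D_apply, der, CliffordAlgebra.contractLeft_algebraMap]
  | add x y i hx hy ihx ihy => simp [map_add, ihx, ihy, smul_add]
  | mem_mul m hm i x hx ih =>
      obtain ⟨v, rfl⟩ := hm
      rw [D_apply]
      have key : ∀ j : Fin L, σg L j * der L j (ExteriorAlgebra.ι ℝ v * x)
          = v j • (σg L j * x) + ExteriorAlgebra.ι ℝ v * (σg L j * der L j x) := by
        intro j
        rw [der_ι_mul, mul_sub, mul_smul_comm, ← mul_assoc,
          show σg L j * ExteriorAlgebra.ι ℝ v = -(ExteriorAlgebra.ι ℝ v * σg L j) from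
            anticomm L _ v, neg_mul, sub_neg_eq_add, mul_assoc]
      calc (∑ j, σg L j * der L j (ExteriorAlgebra.ι ℝ v * x))
          = ∑ j, (v j • (σg L j * x) + ExteriorAlgebra.ι ℝ v * (σg L j * der L j x)) := by
            exact Finset.sum_congr rfl fun j _ => key j
        _ = (∑ j, v j • σg L j) * x + ExteriorAlgebra.ι ℝ v * ∑ j, σg L j * der L j x := by
            rw [Finset.sum_add_distrib, Finset.sum_mul, Finset.mul_sum]
            simp [smul_mul_assoc]
        _ = ExteriorAlgebra.ι ℝ v * x + ExteriorAlgebra.ι ℝ v * ((i : ℝ) • x) := by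
            rw [sum_smul_σg, ← D_apply, ih]
        _ = ((i + 1 : ℕ) : ℝ) • (ExteriorAlgebra.ι ℝ v * x) := by
            push_cast
            rw [mul_smul_comm, add_smul, one_smul, add_comm]


noncomputable def P (k : ℕ) (x : Λ) : Λ :=
  (DirectSum.decompose 𝒜 x k : Λ)

lemma P_mem (k : ℕ) (x : Λ) : P L k x ∈ ⋀[ℝ]^k (Fin L → ℝ) := (DirectSum.decompose 𝒜 x k).2

lemma P_zero (k : ℕ) : P L k 0 = 0 := by simp [P]

lemma P_add (k : ℕ) (x y : Λ) : P L k (x + y) = P L k x + P L k y := by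
  simp [P, DirectSum.decompose_add]

lemma P_smul (k : ℕ) (r : ℝ) (x : Λ) : P L k (r • x) = r • P L k x := by
  simp only [P, DirectSum.decompose_smul, DFinsupp.coe_smul, Pi.smul_apply,
    Submodule.coe_smul]
  rfl

lemma P_sub (k : ℕ) (x y : Λ) : P L k (x - y) = P L k x - P L k y := by
  simp [P, DirectSum.decompose_sub]

lemma P_of_mem_same (k : ℕ) (x : Λ) (hx : x ∈ ⋀[ℝ]^k (Fin L → ℝ)) : P L k x = x :=
  DirectSum.decompose_of_mem_same 𝒜 hx

lemma P_of_mem_ne (m k : ℕ) (x : Λ) (hx : x ∈ ⋀[ℝ]^m (Fin L → ℝ)) (hmk : m ≠ k) :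
    P L k x = 0 := by
  have := DirectSum.decompose_of_mem_ne 𝒜 hx hmk
  simpa [P] using this

lemma σg_mem (j : Fin L) : σg L j ∈ ⋀[ℝ]^1 (Fin L → ℝ) := by
  show σg L j ∈ LinearMap.range (ExteriorAlgebra.ι ℝ : (Fin L → ℝ) →ₗ[ℝ] Λ) ^ 1
  rw [pow_one]
  exact LinearMap.mem_range_self _ _

lemma σg_mul_P (j : Fin L) (k : ℕ) (x : Λ) :
    P L (k + 1) (σg L j * x) = σg L j * P L k x := by
  induction x using DirectSum.Decomposition.inductionOn 𝒜 with
  | zero => simp [P_zero]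
  | add x y hx hy => rw [mul_add, P_add, P_add, hx, hy, mul_add]
  | homogeneous hm =>
      rename_i m
      obtain ⟨x, hx⟩ := hm
      have hmul : σg L j * x ∈ ⋀[ℝ]^(m + 1) (Fin L → ℝ) := by
        have := SetLike.mul_mem_graded (σg_mem L j) hx
        simpa [add_comm] using this
      by_cases hmk : m = k
      · subst hmk
        rw [P_of_mem_same L (m+1) _ hmul, P_of_mem_same L m _ hx]
      · rw [P_of_mem_ne L (m+1) (k+1) _ hmul (by omega), P_of_mem_ne L m k _ hx hmk, mul_zero]

lemma P_D (k : ℕ) (x : Λ) : P L k (D L x) = (k : ℝ) • P L k x := by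
  induction x using DirectSum.Decomposition.inductionOn 𝒜 with
  | zero => simp [P_zero]
  | add x y hx hy => rw [map_add, P_add, P_add, hx, hy, smul_add]
  | homogeneous hm =>
      rename_i m
      obtain ⟨x, hx⟩ := hm
      rw [D_grade L m x hx, P_smul]
      by_cases hmk : m = k
      · subst hmk; rw [P_of_mem_same L m x hx]
      · rw [P_of_mem_ne L m k x hx hmk, smul_zero, smul_zero]

lemma high_grade_zero (n : ℕ) (hn : L < n) (x : Λ) (hx : x ∈ ⋀[ℝ]^n (Fin L → ℝ)) :
    x = 0 := by
  rw [← ExteriorAlgebra.ιMulti_span_fixedDegree] at hx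
  induction hx using Submodule.span_induction with
  | mem x hx =>
      obtain ⟨v, rfl⟩ := hx
      have hv : ∀ i : Fin n, v i = ∑ j : Fin L, v i j • (Pi.single j 1 : Fin L → ℝ) := by
        intro i
        ext j
        simp [Pi.single_apply]
      have hfun : v = fun i => ∑ j : Fin L, v i j • (Pi.single j 1 : Fin L → ℝ) :=
        funext hv
      rw [← AlternatingMap.coe_multilinearMap, hfun, MultilinearMap.map_sum]
      refine Finset.sum_eq_zero fun r _ => ?_
      rw [MultilinearMap.map_smul_univ]
      have hnotinj : ¬ Function.Injective fun i : Fin n => (Pi.single (r i) 1 : Fin L → ℝ) := by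
        intro hinj
        have hrinj : Function.Injective r := by
          intro a b hab
          apply hinj
          simp only []
          rw [hab]
        have := Fintype.card_le_of_injective r hrinj
        simp at this
        omega
      rw [AlternatingMap.coe_multilinearMap,
        AlternatingMap.map_eq_zero_of_not_injective _ _ hnotinj, smul_zero]
  | zero => rfl
  | add x y _ _ hx hy => rw [hx, hy, add_zero]
  | smul r x _ hx => rw [hx, smul_zero]

lemma σg_ne_zero (j : Fin L) : σg L j ≠ 0 := by
  rw [σg, Ne, ExteriorAlgebra.ι_eq_zero_iff]
  intro hc
  have := congrFun hc j
  simp at this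

lemma grade0_cancel (j : Fin L) (x : Λ) (hx : x ∈ ⋀[ℝ]^0 (Fin L → ℝ))
    (hz : σg L j * x = 0) : x = 0 := by
  have hx' : x ∈ (LinearMap.range (ExteriorAlgebra.ι ℝ : (Fin L → ℝ) →ₗ[ℝ] Λ)) ^ 0 := hx
  rw [pow_zero, Submodule.mem_one] at hx'
  obtain ⟨r, rfl⟩ := hx'
  have : r • σg L j = 0 := by
    rw [Algebra.smul_def, Algebra.commutes]
    exact hz
  rcases smul_eq_zero.mp this with hr | hs
  · rw [hr, map_zero]
  · exact absurd hs (σg_ne_zero L j)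


lemma der_σg_mul (i j : Fin L) (x : Λ) :
    der L i (σg L j * x) = (Pi.single j 1 : Fin L → ℝ) i • x - σg L j * der L i x := by
  rw [σg, der_ι_mul]

end VV

set_option maxHeartbeats 1000000 in
theorem stmt_2 (L : ℕ) (A : Fin L → ExteriorAlgebra ℝ (Fin L → ℝ))
    (σ : Fin L → ExteriorAlgebra ℝ (Fin L → ℝ))
    (hσ : ∀ i : Fin L, σ i = ExteriorAlgebra.ι ℝ (Pi.single i (1 : ℝ)))
    (h : ∀ i j : Fin L, σ j * A i + σ i * A j = 0) :
    ∃ F : ExteriorAlgebra ℝ (Fin L → ℝ), ∀ i : Fin L, A i = σ i * F := by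
  have hσg : ∀ i, σ i = VV.σg L i := hσ
  simp only [hσg] at h ⊢
  clear hσ hσg σ
  set G : ExteriorAlgebra ℝ (Fin L → ℝ) := ∑ i, VV.der L i (A i) with hG
  -- main identity
  have hrel : ∀ j, VV.σg L j * G = ((L : ℝ) + 1) • A j - VV.D L (A j) := by
    intro j
    have key : ∀ i : Fin L,
        ((Pi.single j 1 : Fin L → ℝ) i • A i - VV.σg L j * VV.der L i (A i))
          + (A j - VV.σg L i * VV.der L i (A j)) = 0 := by
      intro i
      have h0 := congrArg (VV.der L i) (h i j)
      rw [map_add, map_zero, VV.der_σg_mul, VV.der_σg_mul, Pi.single_eq_same, one_smul] at h0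
      exact h0
    have hsum : ∑ i : Fin L,
        (((Pi.single j 1 : Fin L → ℝ) i • A i - VV.σg L j * VV.der L i (A i))
          + (A j - VV.σg L i * VV.der L i (A j))) = 0 :=
      Finset.sum_eq_zero fun i _ => key i
    have e1 : ∑ i : Fin L, (Pi.single j 1 : Fin L → ℝ) i • A i = A j := by
      rw [Finset.sum_eq_single j]
      · rw [Pi.single_eq_same, one_smul]
      · intro i _ hij
        rw [Pi.single_eq_of_ne hij, zero_smul]
      · intro hj; exact absurd (Finset.mem_univ j) hj
    have e2 : ∑ i : Fin L, VV.σg L j * VV.der L i (A i) = VV.σg L j * G := by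
      rw [hG, Finset.mul_sum]
    have e3 : ∑ i : Fin L, (A j - VV.σg L i * VV.der L i (A j))
        = (L : ℝ) • A j - VV.D L (A j) := by
      rw [Finset.sum_sub_distrib, ← VV.D_apply, Finset.sum_const, Finset.card_univ,
        Fintype.card_fin, ← Nat.cast_smul_eq_nsmul ℝ]
    rw [Finset.sum_add_distrib, Finset.sum_sub_distrib, e1, e2, e3] at hsum
    have hX : VV.σg L j * G = A j + ((L : ℝ) • A j - VV.D L (A j)) := by
      rw [sub_add_eq_add_sub, sub_eq_zero] at hsum
      exact hsum.symm
    rw [hX, add_smul, one_smul]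
    abel
  -- graded consequence
  have hσP : ∀ (j : Fin L) (k : ℕ),
      VV.σg L j * VV.P L k G = ((L : ℝ) - k) • VV.P L (k + 1) (A j) := by
    intro j k
    have h1 := congrArg (VV.P L (k + 1)) (hrel j)
    rw [VV.σg_mul_P, VV.P_sub, VV.P_smul, VV.P_D] at h1
    rw [h1, ← sub_smul]
    congr 1
    push_cast
    ring
  -- grade 0 component vanishes
  have hP0 : ∀ j, VV.P L 0 (A j) = 0 := by
    intro j
    have hii : VV.σg L j * A j = 0 := by
      have h2 : (2 : ℝ) • (VV.σg L j * A j) = 0 := by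
        rw [two_smul]; exact h j j
      have h3 := congrArg (fun y => (2 : ℝ)⁻¹ • y) h2
      simp only [smul_smul, smul_zero] at h3
      norm_num at h3
      exact h3
    have h1 := congrArg (VV.P L 1) hii
    rw [show (1 : ℕ) = 0 + 1 from rfl, VV.σg_mul_P] at h1
    rw [VV.P_zero] at h1
    exact VV.grade0_cancel L j _ (VV.P_mem L 0 _) h1
  -- high grades vanish
  have hPhigh : ∀ (j : Fin L) (m : ℕ), L < m → VV.P L m (A j) = 0 := fun j m hm =>
    VV.high_grade_zero L m hm _ (VV.P_mem L m _)
  -- decomposition of A j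
  have hAdec : ∀ j, A j = ∑ k ∈ Finset.range L, VV.P L (k + 1) (A j) := by
    intro j
    classical
    have hsupp := DirectSum.sum_support_decompose
      (fun k : ℕ => ⋀[ℝ]^k (Fin L → ℝ)) (A j)
    have hsub : (DirectSum.decompose (fun k : ℕ => ⋀[ℝ]^k (Fin L → ℝ)) (A j)).support
        ⊆ Finset.range (L + 1) := by
      intro m hm
      rw [Finset.mem_range]
      by_contra hc
      have : VV.P L m (A j) = 0 := hPhigh j m (by omega)
      rw [DFinsupp.mem_support_iff] at hm
      exact hm (Subtype.ext this)
    have heq : ∑ m ∈ Finset.range (L + 1), VV.P L m (A j) = A j := by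
      conv_rhs => rw [← hsupp]
      exact (Finset.sum_subset hsub (fun m _ hm => by
        simp [VV.P, DFinsupp.notMem_support_iff.mp hm])).symm
    have hsplit : ∑ m ∈ Finset.range (L + 1), VV.P L m (A j)
        = (∑ k ∈ Finset.range L, VV.P L (k + 1) (A j)) + VV.P L 0 (A j) :=
      Finset.sum_range_succ' _ _
    conv_lhs => rw [← heq]
    rw [hsplit, hP0 j, add_zero]
  -- final
  refine ⟨∑ k ∈ Finset.range L, ((L : ℝ) - k)⁻¹ • VV.P L k G, fun j => ?_⟩
  rw [Finset.mul_sum]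
  rw [hAdec j]
  refine Finset.sum_congr rfl fun k hk => ?_
  rw [Finset.mem_range] at hk
  have hLk : ((L : ℝ) - k) ≠ 0 := by
    have : (k : ℝ) < L := by exact_mod_cast hk
    intro hc
    linarith
  rw [mul_smul_comm, hσP j k, smul_smul, inv_mul_cancel₀ hLk, one_smul]
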